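/- Let ℰ be a Hilbert 𝒜-module over a C*-algebra 𝒜, and let ℋ and 𝒦 be closed submodules of ℰ such that ℋ ∩ 𝒦 is orthogonally complemented in ℰ. Let {ω_j}_{j≥1} be positive linear functionals on 𝒜 with sup_j ‖ω_j‖ < ∞ such that, for each j, the closure of ι_{ω_j}(ℋ ∩ 𝒦) in ℰ_{ω_j} equals the intersection of the closures of ι_{ω_j}(ℋ) and ι_{ω_j}(𝒦) in ℰ_{ω_j}. Then for every ω in the σ-convex hull of {ω_1, ω_2, …}, the closure of ι_ω(ℋ ∩ 𝒦) in ℰ_ω equals the intersection of the closures of ι_ω(ℋ) and ι_ω(𝒦) in ℰ_ω. -/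

import Mathlib

open scoped ComplexOrder InnerProductSpace RightActions
open Filter Topology

universe v

/-- The Hilbert C⋆-module class as it stood in Mathlib of December 2024 (right `Aᵐᵒᵖ`-action),
restated here because Mathlib's `CStarModule` now uses a left `A`-action. -/
class CStarModuleRight (A E : Type*) [NonUnitalSemiring A] [StarRing A]
    [Module ℂ A] [AddCommGroup E] [Module ℂ E] [PartialOrder A] [SMul Aᵐᵒᵖ E] [Norm A] [Norm E]
    extends Inner A E where
  inner_add_right {x} {y} {z} : inner x (y + z) = inner x y + inner x z
  inner_self_nonneg {x} : 0 ≤ inner x x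
  inner_self {x} : inner x x = 0 ↔ x = 0
  inner_op_smul_right {a : A} {x y : E} : inner x (y <• a) = inner x y * a
  inner_smul_right_complex {z : ℂ} {x} {y} : inner x (z • y) = z • inner x y
  star_inner x y : star (inner x y) = inner y x
  norm_eq_sqrt_norm_inner_self x : ‖x‖ = √‖inner x x‖

/-- Finset Cauchy–Schwarz in square-root form. -/
private lemma finset_cs_sqrt (s : Finset ℕ) (a b : ℕ → ℝ) (ha : ∀ j, 0 ≤ a j)
    (hb : ∀ j, 0 ≤ b j) :
    ∑ j ∈ s, a j * b j ≤ Real.sqrt (∑ j ∈ s, (a j) ^ 2) * Real.sqrt (∑ j ∈ s, (b j) ^ 2) := by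
  rw [← Real.sqrt_mul (Finset.sum_nonneg fun j _ => sq_nonneg _)]
  rw [show (∑ j ∈ s, a j * b j) = Real.sqrt ((∑ j ∈ s, a j * b j) ^ 2) from
    (Real.sqrt_sq (Finset.sum_nonneg fun j _ => mul_nonneg (ha j) (hb j))).symm]
  exact Real.sqrt_le_sqrt (Finset.sum_mul_sq_le_sq_mul_sq s a b)

/-- **Corollary 2.6.** Let `ℋ, 𝒦` be closed submodules of `ℰ` with `ℋ ∩ 𝒦`
orthogonally complemented, and let `{ω_j}_{j≥1}` be positive linear functionals with
`sup_j ‖ω_j‖ < ∞` such that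
`closure ι_{ω_j}(ℋ ∩ 𝒦) = closure ι_{ω_j}(ℋ) ∩ closure ι_{ω_j}(𝒦)` for each `j`.  Then the
same equality holds for every `ω` in the σ-convex hull of `{ω_1, ω_2, …}`; the
localization of any such `ω` is modelled abstractly by an arbitrary Hilbert space `F` with
a densely-ranged map `ι` satisfying `(ι x, ι y) = ω⟨x,y⟩`. -/
theorem closure_inter_localization_of_sigma_convexHull
    {A E : Type*} [NonUnitalCStarAlgebra A] [PartialOrder A] [StarOrderedRing A]
    [NormedAddCommGroup E] [NormedSpace ℂ E] [SMul Aᵐᵒᵖ E] [CStarModuleRight A E] [CompleteSpace E]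
    -- `ℋ` and `𝒦` are closed submodules of `ℰ`
    (H K : Submodule ℂ E) (hHclosed : IsClosed (H : Set E)) (hKclosed : IsClosed (K : Set E))
    (hHA : ∀ (a : A) (x : E), x ∈ H → x <• a ∈ H)
    (hKA : ∀ (a : A) (x : E), x ∈ K → x <• a ∈ K)
    -- `ℋ ∩ 𝒦` is orthogonally complemented in `ℰ`
    (hcompl : ∀ x : E, ∃ y ∈ H ⊓ K, ∃ z : E,
      (∀ w ∈ H ⊓ K, ⟪w, z⟫_A = 0) ∧ x = y + z)
    -- the positive linear functionals `ω_j`, uniformly bounded in norm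
    (ωs : ℕ → (A →L[ℂ] ℂ))
    (hpos : ∀ j (a : A), 0 ≤ a → 0 ≤ ωs j a)
    (hbdd : ∃ C : ℝ, ∀ j, ‖ωs j‖ ≤ C)
    -- abstract models of the localizations `ℰ_{ω_j}`
    (Fj : ℕ → Type*) [∀ j, NormedAddCommGroup (Fj j)] [∀ j, InnerProductSpace ℂ (Fj j)]
    [∀ j, CompleteSpace (Fj j)]
    (ιj : ∀ j, E →ₗ[ℂ] Fj j) (hιj : ∀ j, DenseRange (ιj j))
    (hinnerj : ∀ j (x y : E), ⟪ιj j x, ιj j y⟫_ℂ = ωs j ⟪x, y⟫_A)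
    -- the hypothesis `(ℋ ∩ 𝒦)_{ω_j} = ℋ_{ω_j} ∩ 𝒦_{ω_j}` for each `j`
    (hj : ∀ j, closure (ιj j '' ((H ⊓ K : Submodule ℂ E) : Set E)) =
      closure (ιj j '' (H : Set E)) ∩ closure (ιj j '' (K : Set E))) :
    -- conclusion: the same holds for every `ω` in the σ-convex hull of `{ω_1, ω_2, …}`
    ∀ (f : ℕ → ℕ) (lam : ℕ → ℝ), (∀ j, 0 < lam j) → HasSum lam 1 →
    ∀ (ω : A →L[ℂ] ℂ), (∀ a : A, HasSum (fun j => (lam j : ℂ) * ωs (f j) a) (ω a)) →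
    ∀ (F : Type v) [NormedAddCommGroup F] [InnerProductSpace ℂ F] [CompleteSpace F]
      (ι : E →ₗ[ℂ] F), DenseRange ι → (∀ x y : E, ⟪ι x, ι y⟫_ℂ = ω ⟪x, y⟫_A) →
      closure (ι '' ((H ⊓ K : Submodule ℂ E) : Set E)) =
        closure (ι '' (H : Set E)) ∩ closure (ι '' (K : Set E)) := by
  intro f lam hlam hlamsum ω hω F _FN _FI _FC ι hdense hinner
  classical
  set L : Submodule ℂ E := H ⊓ K with hLdef
  -- the key Parseval-type identity
  have key : ∀ x : E, HasSum (fun j => lam j * ‖ιj (f j) x‖ ^ 2) (‖ι x‖ ^ 2) := by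
    intro x
    have h1 := hω ⟪x, x⟫_A
    have h2 : (fun j => (lam j : ℂ) * ωs (f j) ⟪x, x⟫_A)
        = fun j => ((lam j * ‖ιj (f j) x‖ ^ 2 : ℝ) : ℂ) := by
      funext j
      rw [← hinnerj, inner_self_eq_norm_sq_to_K]
      push_cast
      rfl
    have h3 : ω ⟪x, x⟫_A = ((‖ι x‖ ^ 2 : ℝ) : ℂ) := by
      rw [← hinner, inner_self_eq_norm_sq_to_K]
      push_cast
      rfl
    rw [h2, h3] at h1
    have h4 := h1.mapL Complex.reCLM
    simpa [← Complex.ofReal_pow] using h4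
  -- per-component norm bound
  have keybd : ∀ (j : ℕ) (x : E),
      ‖ιj (f j) x‖ ≤ Real.sqrt (lam j)⁻¹ * ‖ι x‖ := by
    intro j x
    have h0 : (0:ℝ) < lam j := hlam j
    have h1 : lam j * ‖ιj (f j) x‖ ^ 2 ≤ ‖ι x‖ ^ 2 :=
      le_hasSum (key x) j (fun i _ => mul_nonneg (hlam i).le (sq_nonneg _))
    have h2 : ‖ιj (f j) x‖ ^ 2 ≤ (Real.sqrt (lam j)⁻¹ * ‖ι x‖) ^ 2 := by
      rw [mul_pow, Real.sq_sqrt (inv_nonneg.mpr h0.le), inv_mul_eq_div, le_div_iff₀ h0,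
        mul_comm]
      exact h1
    exact (pow_le_pow_iff_left₀ (norm_nonneg _)
      (mul_nonneg (Real.sqrt_nonneg _) (norm_nonneg _)) two_ne_zero).mp h2
  -- the core claim
  have core : ∀ z : E, (∀ w ∈ L, ⟪w, z⟫_A = 0) → ∀ v : F,
      v ∈ closure (ι '' (H : Set E)) → v ∈ closure (ι '' (K : Set E)) →
      ⟪ι z, v⟫_ℂ = 0 := by
    intro z hz v hvH hvK
    obtain ⟨uH, huH, huHv⟩ := mem_closure_iff_seq_limit.mp hvH
    obtain ⟨uK, huK, huKv⟩ := mem_closure_iff_seq_limit.mp hvK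
    choose h hhH hhu using huH
    choose k hkK hku using huK
    have hhv : Tendsto (fun n => ι (h n)) atTop (𝓝 v) := by
      rw [show (fun n : ℕ => ι (h n)) = uH from funext hhu]; exact huHv
    have hkv : Tendsto (fun n => ι (k n)) atTop (𝓝 v) := by
      rw [show (fun n : ℕ => ι (k n)) = uK from funext hku]; exact huKv
    -- per-component limits
    have cauchy : ∀ j : ℕ, ∃ wj : Fj (f j),
        Tendsto (fun n => ιj (f j) (h n)) atTop (𝓝 wj) := by
      intro j
      apply cauchySeq_tendsto_of_complete
      have hc : CauchySeq (fun n => ι (h n)) := hhv.cauchySeq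
      rw [Metric.cauchySeq_iff] at hc ⊢
      intro ε hε
      have hsl : (0:ℝ) < Real.sqrt (lam j) := Real.sqrt_pos.mpr (hlam j)
      obtain ⟨N, hN⟩ := hc (ε * Real.sqrt (lam j)) (by positivity)
      refine ⟨N, fun m hm n hn => ?_⟩
      have hlt := hN m hm n hn
      rw [dist_eq_norm] at hlt ⊢
      have hb : ‖ιj (f j) (h m) - ιj (f j) (h n)‖
          ≤ Real.sqrt (lam j)⁻¹ * ‖ι (h m) - ι (h n)‖ := by
        rw [← map_sub, ← map_sub]; exact keybd j _
      calc ‖ιj (f j) (h m) - ιj (f j) (h n)‖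
          ≤ Real.sqrt (lam j)⁻¹ * ‖ι (h m) - ι (h n)‖ := hb
        _ < Real.sqrt (lam j)⁻¹ * (ε * Real.sqrt (lam j)) := by
            apply mul_lt_mul_of_pos_left hlt
            rw [Real.sqrt_inv]
            exact inv_pos.mpr hsl
        _ = ε := by
            rw [Real.sqrt_inv]
            field_simp
    choose w hw using cauchy
    -- w j lies in the localized intersection
    have hwL : ∀ j, w j ∈ closure (ιj (f j) '' (L : Set E)) := by
      intro j
      rw [hLdef, hj (f j)]
      constructor
      · exact mem_closure_of_tendsto (hw j)
          (Eventually.of_forall fun n => ⟨h n, hhH n, rfl⟩)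
      · have hk0 : Tendsto (fun n => ιj (f j) (k n) - ιj (f j) (h n)) atTop (𝓝 0) := by
          apply squeeze_zero_norm
            (a := fun n => Real.sqrt (lam j)⁻¹ * ‖ι (k n) - ι (h n)‖)
          · intro n
            rw [← map_sub, ← map_sub]; exact keybd j _
          · have hkh : Tendsto (fun n => ι (k n) - ι (h n)) atTop (𝓝 0) := by
              simpa using hkv.sub hhv
            simpa using hkh.norm.const_mul (Real.sqrt (lam j)⁻¹)
        have hkw : Tendsto (fun n => ιj (f j) (k n)) atTop (𝓝 (w j)) := by
          have := hk0.add (hw j)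
          simpa using this
        exact mem_closure_of_tendsto hkw
          (Eventually.of_forall fun n => ⟨k n, hkK n, rfl⟩)
    -- orthogonality of ιj z to w j
    have hzw : ∀ j, ⟪ιj (f j) z, w j⟫_ℂ = 0 := by
      intro j
      have hvanish : ∀ u ∈ ιj (f j) '' (L : Set E), ⟪ιj (f j) z, u⟫_ℂ = 0 := by
        rintro _ ⟨l, hl, rfl⟩
        rw [hinnerj]
        have h0 : ⟪z, l⟫_A = 0 := by
          rw [← CStarModuleRight.star_inner, hz l hl, star_zero]
        rw [h0, map_zero]
      have hsub : closure (ιj (f j) '' (L : Set E))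
          ⊆ {u | ⟪ιj (f j) z, u⟫_ℂ = 0} :=
        closure_minimal hvanish
          (isClosed_eq (Continuous.inner continuous_const continuous_id) continuous_const)
      exact hsub (hwL j)
    -- the crucial norm bound
    have hbound : ∀ n, ‖⟪ι z, ι (h n)⟫_ℂ‖ ≤ ‖ι z‖ * ‖ι (h n) - v‖ := by
      intro n
      have hsum : HasSum (fun j => (lam j : ℂ) * ⟪ιj (f j) z, ιj (f j) (h n)⟫_ℂ)
          ⟪ι z, ι (h n)⟫_ℂ := by
        have h0 := hω ⟪z, h n⟫_A
        rw [← hinner z (h n)] at h0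
        simp only [hinnerj]
        exact h0
      have hre : ∀ s : Finset ℕ,
          ‖∑ j ∈ s, (lam j : ℂ) * ⟪ιj (f j) z, ιj (f j) (h n)⟫_ℂ‖
            ≤ ‖ι z‖ * ‖ι (h n) - v‖ := by
        intro s
        have e1 : ∀ j, (lam j : ℂ) * ⟪ιj (f j) z, ιj (f j) (h n)⟫_ℂ
            = (lam j : ℂ) * ⟪ιj (f j) z, ιj (f j) (h n) - w j⟫_ℂ := by
          intro j; rw [inner_sub_right, hzw j, sub_zero]
        rw [Finset.sum_congr rfl fun j _ => e1 j]
        have step1 : ‖∑ j ∈ s, (lam j : ℂ) * ⟪ιj (f j) z, ιj (f j) (h n) - w j⟫_ℂ‖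
            ≤ ∑ j ∈ s, (Real.sqrt (lam j) * ‖ιj (f j) z‖)
              * (Real.sqrt (lam j) * ‖ιj (f j) (h n) - w j‖) := by
          refine le_trans (norm_sum_le _ _) (Finset.sum_le_sum fun j _ => ?_)
          rw [norm_mul, Complex.norm_real, Real.norm_eq_abs, abs_of_pos (hlam j)]
          have hss : Real.sqrt (lam j) * Real.sqrt (lam j) = lam j :=
            Real.mul_self_sqrt (hlam j).le
          calc lam j * ‖⟪ιj (f j) z, ιj (f j) (h n) - w j⟫_ℂ‖
              ≤ lam j * (‖ιj (f j) z‖ * ‖ιj (f j) (h n) - w j‖) :=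
                mul_le_mul_of_nonneg_left (norm_inner_le_norm _ _) (hlam j).le
            _ = (Real.sqrt (lam j) * ‖ιj (f j) z‖)
                * (Real.sqrt (lam j) * ‖ιj (f j) (h n) - w j‖) := by
                linear_combination
                  (-(‖ιj (f j) z‖ * ‖ιj (f j) (h n) - w j‖)) * hss
        have step2 := finset_cs_sqrt s
          (fun j => Real.sqrt (lam j) * ‖ιj (f j) z‖)
          (fun j => Real.sqrt (lam j) * ‖ιj (f j) (h n) - w j‖)
          (fun j => mul_nonneg (Real.sqrt_nonneg _) (norm_nonneg _))
          (fun j => mul_nonneg (Real.sqrt_nonneg _) (norm_nonneg _))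
        have esq : ∀ (c : ℕ → ℝ), (fun j => (Real.sqrt (lam j) * c j) ^ 2)
            = fun j => lam j * (c j) ^ 2 := by
          intro c; funext j; rw [mul_pow, Real.sq_sqrt (hlam j).le]
        have f1 : ∑ j ∈ s, (Real.sqrt (lam j) * ‖ιj (f j) z‖) ^ 2 ≤ ‖ι z‖ ^ 2 := by
          simp only [esq fun j => ‖ιj (f j) z‖]
          exact sum_le_hasSum s (fun j _ => mul_nonneg (hlam j).le (sq_nonneg _)) (key z)
        have f2 : ∑ j ∈ s, (Real.sqrt (lam j) * ‖ιj (f j) (h n) - w j‖) ^ 2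
            ≤ ‖ι (h n) - v‖ ^ 2 := by
          simp only [esq fun j => ‖ιj (f j) (h n) - w j‖]
          have hm : ∀ m, ∑ j ∈ s, lam j * ‖ιj (f j) (h n) - ιj (f j) (h m)‖ ^ 2
              ≤ ‖ι (h n) - ι (h m)‖ ^ 2 := by
            intro m
            have := sum_le_hasSum s
              (fun j _ => mul_nonneg (hlam j).le (sq_nonneg _)) (key (h n - h m))
            simpa [map_sub] using this
          have t1 : Tendsto
              (fun m => ∑ j ∈ s, lam j * ‖ιj (f j) (h n) - ιj (f j) (h m)‖ ^ 2)
              atTop (𝓝 (∑ j ∈ s, lam j * ‖ιj (f j) (h n) - w j‖ ^ 2)) := by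
            refine tendsto_finset_sum s fun j _ => ?_
            exact ((tendsto_const_nhds.sub (hw j)).norm.pow 2).const_mul (lam j)
          have t2 : Tendsto (fun m => ‖ι (h n) - ι (h m)‖ ^ 2) atTop
              (𝓝 (‖ι (h n) - v‖ ^ 2)) :=
            (tendsto_const_nhds.sub hhv).norm.pow 2
          exact le_of_tendsto_of_tendsto' t1 t2 hm
        have s1 : Real.sqrt (∑ j ∈ s, (Real.sqrt (lam j) * ‖ιj (f j) z‖) ^ 2)
            ≤ ‖ι z‖ := by
          rw [show ‖ι z‖ = Real.sqrt (‖ι z‖ ^ 2) from (Real.sqrt_sq (norm_nonneg _)).symm]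
          exact Real.sqrt_le_sqrt f1
        have s2 : Real.sqrt (∑ j ∈ s, (Real.sqrt (lam j) * ‖ιj (f j) (h n) - w j‖) ^ 2)
            ≤ ‖ι (h n) - v‖ := by
          rw [show ‖ι (h n) - v‖ = Real.sqrt (‖ι (h n) - v‖ ^ 2) from
            (Real.sqrt_sq (norm_nonneg _)).symm]
          exact Real.sqrt_le_sqrt f2
        calc ‖∑ j ∈ s, (lam j : ℂ) * ⟪ιj (f j) z, ιj (f j) (h n) - w j⟫_ℂ‖
            ≤ ∑ j ∈ s, (Real.sqrt (lam j) * ‖ιj (f j) z‖)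
              * (Real.sqrt (lam j) * ‖ιj (f j) (h n) - w j‖) := step1
          _ ≤ Real.sqrt (∑ j ∈ s, (Real.sqrt (lam j) * ‖ιj (f j) z‖) ^ 2)
              * Real.sqrt (∑ j ∈ s, (Real.sqrt (lam j) * ‖ιj (f j) (h n) - w j‖) ^ 2) :=
              step2
          _ ≤ ‖ι z‖ * ‖ι (h n) - v‖ :=
              mul_le_mul s1 s2 (Real.sqrt_nonneg _) (norm_nonneg _)
      exact le_of_tendsto' (Filter.Tendsto.norm hsum) hre
    -- conclude the core claim
    have t3 : Tendsto (fun n => ⟪ι z, ι (h n)⟫_ℂ) atTop (𝓝 ⟪ι z, v⟫_ℂ) :=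
      tendsto_const_nhds.inner hhv
    have t4 : Tendsto (fun n => ⟪ι z, ι (h n)⟫_ℂ) atTop (𝓝 0) := by
      apply squeeze_zero_norm hbound
      have hny : Tendsto (fun n => ι (h n) - v) atTop (𝓝 0) := by
        simpa using hhv.sub_const v
      simpa using hny.norm.const_mul ‖ι z‖
    exact tendsto_nhds_unique t3 t4
  -- main argument
  apply Set.Subset.antisymm
  · refine Set.subset_inter (closure_mono (Set.image_mono ?_))
      (closure_mono (Set.image_mono ?_))
    · intro t ht
      exact (Submodule.mem_inf.mp ht).1
    · intro t ht
      exact (Submodule.mem_inf.mp ht).2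
  · rintro v ⟨hvH, hvK⟩
    set M : Submodule ℂ F := (L.map ι).topologicalClosure with hM
    have hMc : (M : Set F) = closure (ι '' (L : Set E)) := by
      rw [hM, Submodule.topologicalClosure_coe, Submodule.map_coe]
    haveI : CompleteSpace M :=
      IsClosed.completeSpace_coe (hs := hMc ▸ isClosed_closure)
    obtain ⟨y, hy, wv, hwv, hvyw⟩ := M.exists_add_mem_mem_orthogonal v
    have hwv0 : wv = 0 := by
      have hwcl : wv ∈ closure (Set.range ι) := by
        rw [hdense.closure_range]; trivial
      obtain ⟨u, hu, huw⟩ := mem_closure_iff_seq_limit.mp hwcl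
      choose x hx using hu
      have hux : Tendsto (fun n => ι (x n)) atTop (𝓝 wv) := by
        rw [show (fun n : ℕ => ι (x n)) = u from funext hx]; exact huw
      choose y' hy' z hz hxyz using fun n => hcompl (x n)
      -- ι (z n) ∈ Mᗮ
      have hzM : ∀ n, ι (z n) ∈ Mᗮ := by
        intro n
        rw [Submodule.mem_orthogonal]
        intro u' hu'
        have hvan : ∀ u'' ∈ ι '' (L : Set E), ⟪u'', ι (z n)⟫_ℂ = 0 := by
          rintro _ ⟨l, hl, rfl⟩
          rw [hinner, hz n l hl, map_zero]
        have hsub : closure (ι '' (L : Set E)) ⊆ {u'' | ⟪u'', ι (z n)⟫_ℂ = 0} :=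
          closure_minimal hvan
            (isClosed_eq (Continuous.inner continuous_id continuous_const) continuous_const)
        exact hsub (by rw [← hMc]; exact hu')
      -- ι (z n) → wv
      have hιz : Tendsto (fun n => ι (z n)) atTop (𝓝 wv) := by
        have hpyth : ∀ n, ‖ι (z n) - wv‖ ≤ ‖ι (x n) - wv‖ := by
          intro n
          have h1 : ι (y' n) ∈ M :=
            Submodule.le_topologicalClosure _ (Submodule.mem_map_of_mem (hy' n))
          have h2 : ι (z n) - wv ∈ Mᗮ := Submodule.sub_mem _ (hzM n) hwv
          have horth : ⟪ι (y' n), ι (z n) - wv⟫_ℂ = 0 :=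
            (Submodule.mem_orthogonal M _).mp h2 _ h1
          have hdecomp : ι (x n) - wv = ι (y' n) + (ι (z n) - wv) := by
            rw [hxyz n, map_add]; abel
          have hnorm : ‖ι (x n) - wv‖ ^ 2
              = ‖ι (y' n)‖ ^ 2 + ‖ι (z n) - wv‖ ^ 2 := by
            have hp := norm_add_sq_eq_norm_sq_add_norm_sq_of_inner_eq_zero _ _ horth
            rw [hdecomp]
            rw [pow_two, pow_two, pow_two]
            exact hp
          have hsq : ‖ι (z n) - wv‖ ^ 2 ≤ ‖ι (x n) - wv‖ ^ 2 := by
            rw [hnorm]; nlinarith [sq_nonneg ‖ι (y' n)‖]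
          exact (pow_le_pow_iff_left₀ (norm_nonneg _) (norm_nonneg _) two_ne_zero).mp hsq
        have h0 : Tendsto (fun n => ι (z n) - wv) atTop (𝓝 0) := by
          apply squeeze_zero_norm hpyth
          have hx0 : Tendsto (fun n => ι (x n) - wv) atTop (𝓝 0) := by
            simpa using hux.sub_const wv
          simpa using hx0.norm
        have := h0.add_const wv
        simpa using this
      -- ⟪wv, v⟫ = 0
      have h1 : ⟪wv, v⟫_ℂ = 0 := by
        have ht1 : Tendsto (fun n => ⟪ι (z n), v⟫_ℂ) atTop (𝓝 ⟪wv, v⟫_ℂ) :=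
          hιz.inner tendsto_const_nhds
        have h0 : ∀ n, ⟪ι (z n), v⟫_ℂ = 0 := fun n => core (z n) (hz n) v hvH hvK
        have ht2 : Tendsto (fun n => ⟪ι (z n), v⟫_ℂ) atTop (𝓝 0) := by
          simp only [h0]
          exact tendsto_const_nhds
        exact tendsto_nhds_unique ht1 ht2
      -- ⟪wv, y⟫ = 0
      have h2 : ⟪wv, y⟫_ℂ = 0 := by
        have := (Submodule.mem_orthogonal M wv).mp hwv y hy
        rw [← inner_conj_symm, this, map_zero]
      have h3 : ⟪wv, wv⟫_ℂ = 0 := by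
        have hwveq : wv = v - y := by rw [hvyw]; abel
        calc ⟪wv, wv⟫_ℂ = ⟪wv, v - y⟫_ℂ := by rw [← hwveq]
          _ = ⟪wv, v⟫_ℂ - ⟪wv, y⟫_ℂ := inner_sub_right _ _ _
          _ = 0 := by rw [h1, h2, sub_zero]
      exact inner_self_eq_zero.mp h3
    have hveq : v = y := by rw [hvyw, hwv0, add_zero]
    rw [hveq, ← hMc]
    exact hy
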